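/- For every u ∈ ℂ, all three roots (with multiplicity) of the cubic R_u have modulus 1 if and only if u ∈ 𝕌. -/

import Mathlib

/-- The cubic encoding the stationary points of the NV phase at positive energy. -/
noncomputable def Rcubic (u ζ : ℂ) : ℂ :=
  ζ ^ 3 - ((starRingEnd ℂ u) / 6) * ζ ^ 2 + (u / 6) * ζ - 1

/-- The region `𝕌` enclosed by the curve `𝒰`. -/
def regionU : Set ℂ :=
  {w : ℂ | ∃ s : ℝ, s ∈ Set.Icc (0 : ℝ) 1 ∧ ∃ φ : ℝ,
    w = 6 * (s : ℂ) * (2 * Complex.exp (-(Complex.I * (φ : ℂ))) + Complex.exp (2 * Complex.I * (φ : ℂ)))}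

open Complex

noncomputable def Ncurve (φ : ℝ) : ℂ :=
  2 * Complex.exp (-(Complex.I * (φ : ℝ))) + Complex.exp (2 * Complex.I * (φ : ℝ))

noncomputable def Fdisc (w : ℂ) : ℝ :=
  (normSq w) ^ 2 - 8 * ((w ^ 3).re) + 18 * normSq w - 27

lemma conj_Ncurve (φ : ℝ) : (starRingEnd ℂ) (Ncurve φ) =
    2 * Complex.exp (Complex.I * (φ : ℝ)) + Complex.exp (-(2 * Complex.I * (φ : ℝ))) := by
  unfold Ncurve
  rw [map_add, map_mul, ← Complex.exp_conj, ← Complex.exp_conj]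
  simp [map_ofNat]

lemma abs_Ncurve_ge (φ : ℝ) : 1 ≤ ‖Ncurve φ‖ := by
  have h1 : ‖2 * Complex.exp (-(Complex.I * (φ : ℝ)))‖ = 2 := by
    simp [Complex.norm_exp]
  have h2 : ‖-(Complex.exp (2 * Complex.I * (φ : ℝ)))‖ = 1 := by
    simp [Complex.norm_exp]
  have key := norm_sub_norm_le (2 * Complex.exp (-(Complex.I * (φ : ℝ))))
      (-(Complex.exp (2 * Complex.I * (φ : ℝ))))
  simp only [sub_neg_eq_add] at key
  rw [h1, h2] at key
  exact le_trans (by norm_num) key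

lemma abs_Ncurve_le (φ : ℝ) : ‖Ncurve φ‖ ≤ 3 := by
  unfold Ncurve
  calc ‖_‖ ≤ ‖2 * Complex.exp (-(Complex.I * (φ : ℝ)))‖ +
      ‖Complex.exp (2 * Complex.I * (φ : ℝ))‖ := norm_add_le _ _
  _ ≤ 3 := by simp [Complex.norm_exp]; norm_num

lemma Fdisc_ofReal (w : ℂ) : ((Fdisc w : ℝ) : ℂ) =
    (w * (starRingEnd ℂ) w) ^ 2 - 4 * (w ^ 3 + ((starRingEnd ℂ) w) ^ 3)
      + 18 * (w * (starRingEnd ℂ) w) - 27 := by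
  have h1 : ((normSq w : ℝ) : ℂ) = w * (starRingEnd ℂ) w := (Complex.mul_conj w).symm
  have h2 : (((w ^ 3).re : ℝ) : ℂ) = (w ^ 3 + ((starRingEnd ℂ) w) ^ 3) / 2 := by
    rw [← map_pow, Complex.add_conj]; push_cast; ring
  unfold Fdisc
  push_cast [h1, h2]
  ring

lemma Fdisc_Ncurve (φ : ℝ) : Fdisc (Ncurve φ) = 0 := by
  rw [← Complex.ofReal_eq_zero, Fdisc_ofReal, conj_Ncurve]
  unfold Ncurve
  have e2 : Complex.exp (2 * Complex.I * (φ : ℝ)) = Complex.exp (Complex.I * (φ : ℝ)) ^ 2 := by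
    rw [← Complex.exp_nat_mul]; ring_nf
  have em : Complex.exp (-(Complex.I * (φ : ℝ))) = (Complex.exp (Complex.I * (φ : ℝ)))⁻¹ :=
    Complex.exp_neg _
  have em2 : Complex.exp (-(2 * Complex.I * (φ : ℝ))) = (Complex.exp (2 * Complex.I * (φ : ℝ)))⁻¹ :=
    Complex.exp_neg _
  rw [em2, e2, em]
  have hne : Complex.exp (Complex.I * (φ : ℝ)) ≠ 0 := Complex.exp_ne_zero _
  field_simp
  ring

lemma exists_unimodular_root (w : ℂ) : ∃ t₀ : ℝ,
    (Complex.exp (((2*t₀ : ℝ) : ℂ) * I)) ^ 3 - (starRingEnd ℂ) w * (Complex.exp (((2*t₀ : ℝ) : ℂ) * I)) ^ 2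
      + w * Complex.exp (((2*t₀ : ℝ) : ℂ) * I) - 1 = 0 := by
  set η := w.arg with hη
  set G : ℝ → ℝ := fun t => Real.sin (3*t) - ((starRingEnd ℂ) w * Complex.exp ((t:ℂ) * I)).im with hGdef
  -- conj w * exp(η I) = |w|
  have hw := Complex.norm_mul_exp_arg_mul_I w
  have hconj : (starRingEnd ℂ) w * Complex.exp ((η:ℂ) * I) = ((‖w‖ : ℝ) : ℂ) := by
    have : (starRingEnd ℂ) w = ((‖w‖ : ℝ) : ℂ) * Complex.exp (-((η:ℂ) * I)) := by
      rw [← hw]; rw [map_mul, ← Complex.exp_conj]; simp [hη]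
    rw [this, mul_assoc, ← Complex.exp_add, neg_add_cancel, Complex.exp_zero, mul_one]
  have him : ∀ c : ℝ, ((starRingEnd ℂ) w * Complex.exp (((η + c : ℝ):ℂ) * I)).im
      = ‖w‖ * Real.sin c := by
    intro c
    have : (starRingEnd ℂ) w * Complex.exp (((η + c : ℝ):ℂ) * I)
        = ((‖w‖ : ℝ) : ℂ) * Complex.exp ((c:ℝ) * I) := by
      rw [show (((η + c : ℝ):ℂ) * I) = (η:ℂ)*I + (c:ℂ)*I by push_cast; ring, Complex.exp_add,
        ← mul_assoc, hconj]
    rw [this, Complex.mul_im]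
    simp [Complex.exp_ofReal_mul_I_im, Complex.exp_ofReal_mul_I_re]
  -- endpoint values
  have hsin_plus : Real.sin (3*(η + Real.pi/2)) = - Real.cos (3*η) := by
    rw [show 3*(η + Real.pi/2) = 3*η + (Real.pi + Real.pi/2) by ring, Real.sin_add]
    norm_num [Real.sin_add, Real.cos_add]
  have hsin_minus : Real.sin (3*(η - Real.pi/2)) = Real.cos (3*η) := by
    rw [show 3*(η - Real.pi/2) = 3*η - (Real.pi + Real.pi/2) by ring, Real.sin_sub]
    norm_num [Real.sin_add, Real.cos_add]
  have hGp : G (η + Real.pi/2) = - Real.cos (3*η) - ‖w‖ := by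
    simp only [hGdef]
    rw [hsin_plus, him (Real.pi/2), Real.sin_pi_div_two]
    ring
  have hGm : G (η - Real.pi/2) = Real.cos (3*η) + ‖w‖ := by
    simp only [hGdef]
    rw [hsin_minus, show η - Real.pi/2 = η + (-(Real.pi/2)) by ring, him (-(Real.pi/2))]
    norm_num
  -- continuity
  have hGcont : Continuous G := by
    apply Continuous.sub
    · exact Real.continuous_sin.comp (continuous_const.mul continuous_id)
    · exact Complex.continuous_im.comp ((continuous_const).mul
        (Complex.continuous_exp.comp (Complex.continuous_ofReal.mul continuous_const)))
  -- IVT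
  have h0mem : (0:ℝ) ∈ Set.uIcc (G (η - Real.pi/2)) (G (η + Real.pi/2)) := by
    rw [Set.mem_uIcc]
    rcases le_total 0 (Real.cos (3*η) + ‖w‖) with h | h
    · right; constructor <;> [linarith [hGp, hGm]; linarith [hGp, hGm]]
    · left; constructor <;> [linarith [hGp, hGm]; linarith [hGp, hGm]]
  obtain ⟨t₀, _, hGt₀⟩ := intermediate_value_uIcc (hGcont.continuousOn
    (s := Set.uIcc (η - Real.pi/2) (η + Real.pi/2))) h0mem
  refine ⟨t₀, ?_⟩
  -- now prove the root equation
  have hG0 : Real.sin (3*t₀) = ((starRingEnd ℂ) w * Complex.exp ((t₀:ℂ) * I)).im := by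
    have := hGt₀; simp only [hGdef] at this; linarith
  set X := Complex.exp ((t₀:ℂ) * I) with hX
  set Xi := Complex.exp (-((t₀:ℂ) * I)) with hXi
  have hXXi : X * Xi = 1 := by
    rw [hX, hXi, ← Complex.exp_add, add_neg_cancel, Complex.exp_zero]
  have hz : Complex.exp (((2*t₀ : ℝ) : ℂ) * I) = X ^ 2 := by
    rw [hX, ← Complex.exp_nat_mul]; congr 1; push_cast; ring
  have hkey : X ^ 3 - Xi ^ 3 = (starRingEnd ℂ) w * X - w * Xi := by
    -- from hG0, cast to ℂ
    have hC : ((Real.sin (3*t₀) : ℝ) : ℂ) * (2*I)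
        = (((((starRingEnd ℂ) w * X).im : ℝ)) : ℂ) * (2*I) := by
      rw [hG0]
    have hL : ((Real.sin (3*t₀) : ℝ) : ℂ) * (2*I) = X^3 - Xi^3 := by
      rw [Complex.ofReal_sin, Complex.sin]
      have h1 : Complex.exp (-(3 * (t₀:ℂ)) * I) = Xi ^ 3 := by
        rw [hXi, ← Complex.exp_nat_mul]; congr 1; push_cast; ring
      have h2 : Complex.exp (3 * (t₀:ℂ) * I) = X ^ 3 := by
        rw [hX, ← Complex.exp_nat_mul]; congr 1; push_cast; ring
      push_cast
      rw [h1, h2]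
      linear_combination (Xi^3 - X^3) * Complex.I_mul_I
    have hR : (((((starRingEnd ℂ) w * X).im : ℝ)) : ℂ) * (2*I)
        = (starRingEnd ℂ) w * X - w * Xi := by
      have hsub := Complex.sub_conj ((starRingEnd ℂ) w * X)
      have hconjX : (starRingEnd ℂ) ((starRingEnd ℂ) w * X) = w * Xi := by
        rw [map_mul, Complex.conj_conj, hX, ← Complex.exp_conj]
        congr 2
        simp
      rw [← hconjX]
      push_cast at hsub
      linear_combination -hsub
    rw [hL] at hC
    rw [hR] at hC
    linear_combination hC
  rw [hz]
  linear_combination (X^3) * hkey + (X^2*Xi^2 + X*Xi + 1 - w*X^2) * hXXi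

lemma mul_Ncurve (η φ : ℝ) : Complex.exp ((( -η : ℝ) : ℂ) * I) * Ncurve φ
    = 2 * Complex.exp (((-(φ+η) : ℝ) : ℂ) * I) + Complex.exp (((2*φ-η : ℝ) : ℂ) * I) := by
  unfold Ncurve
  rw [mul_add]
  congr 1
  · rw [show Complex.exp (((-η : ℝ) : ℂ) * I) * (2 * Complex.exp (-(Complex.I * (φ : ℝ))))
      = 2 * (Complex.exp (((-η : ℝ) : ℂ) * I) * Complex.exp (-(Complex.I * (φ : ℝ)))) by ring,
      ← Complex.exp_add]
    congr 2
    push_cast; ring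
  · rw [← Complex.exp_add]
    congr 1
    push_cast; ring

lemma ray_lemma (η : ℝ) : ∃ φ ρ : ℝ, 1 ≤ ρ ∧ ρ ≤ 3 ∧
    Ncurve φ = (ρ : ℂ) * Complex.exp ((η : ℂ) * I) := by
  set r : ℝ → ℝ := fun φ => (Complex.exp (((-η : ℝ) : ℂ) * I) * Ncurve φ).im with hrdef
  have hr : ∀ φ, r φ = -2 * Real.sin (φ + η) + Real.sin (2*φ - η) := by
    intro φ
    simp only [hrdef]
    rw [mul_Ncurve, Complex.add_im, Complex.mul_im]
    simp only [Complex.re_ofNat, Complex.im_ofNat, Complex.exp_ofReal_mul_I_im]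
    rw [Real.sin_neg]
    ring
  have hre : ∀ φ, (Complex.exp (((-η : ℝ) : ℂ) * I) * Ncurve φ).re
      = 2 * Real.cos (φ + η) + Real.cos (2*φ - η) := by
    intro φ
    rw [mul_Ncurve, Complex.add_re, Complex.mul_re]
    simp only [Complex.re_ofNat, Complex.im_ofNat, Complex.exp_ofReal_mul_I_re]
    rw [Real.cos_neg]
    ring
  have sqrt3 : Real.sqrt 3 > 1.7 := by
    nlinarith [Real.sq_sqrt (show (0:ℝ) ≤ 3 by norm_num), Real.sqrt_nonneg 3]
  set a := -η - Real.pi/3 with ha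
  set b := -η + Real.pi/3 with hb
  have hab : a ≤ b := by
    have := Real.pi_pos; simp only [ha, hb]; linarith
  have hra : 0 < r a := by
    rw [hr]
    have h1 : a + η = -(Real.pi/3) := by rw [ha]; ring
    rw [h1, Real.sin_neg, Real.sin_pi_div_three]
    have := Real.neg_one_le_sin (2*a - η)
    nlinarith
  have hrb : r b < 0 := by
    rw [hr]
    have h1 : b + η = Real.pi/3 := by rw [hb]; ring
    rw [h1, Real.sin_pi_div_three]
    have := Real.sin_le_one (2*b - η)
    nlinarith
  have hrcont : Continuous r := by
    simp only [hrdef]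
    apply Complex.continuous_im.comp
    apply Continuous.mul continuous_const
    unfold Ncurve
    continuity
  have h0mem : (0:ℝ) ∈ Set.Icc (r b) (r a) := ⟨hrb.le, hra.le⟩
  obtain ⟨φ₀, hφ₀mem, hrφ₀⟩ := intermediate_value_Icc' hab hrcont.continuousOn h0mem
  set ρ := (Complex.exp (((-η : ℝ) : ℂ) * I) * Ncurve φ₀).re with hρ
  have hmul : Complex.exp (((-η : ℝ) : ℂ) * I) * Ncurve φ₀ = (ρ : ℂ) := by
    apply Complex.ext
    · simp [hρ]
    · rw [Complex.ofReal_im]; exact hrφ₀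
  have hN : Ncurve φ₀ = (ρ : ℂ) * Complex.exp ((η : ℂ) * I) := by
    have hinv : Complex.exp (((-η : ℝ) : ℂ) * I) * Complex.exp ((η : ℂ) * I) = 1 := by
      rw [← Complex.exp_add]; push_cast; rw [show (-η : ℂ) * I + η * I = 0 by ring, Complex.exp_zero]
    calc Ncurve φ₀ = (Complex.exp (((-η : ℝ) : ℂ) * I) * Ncurve φ₀) * Complex.exp ((η : ℂ) * I)
        - Ncurve φ₀ * (Complex.exp (((-η : ℝ) : ℂ) * I) * Complex.exp ((η : ℂ) * I)) + Ncurve φ₀ := by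
          ring
    _ = (ρ : ℂ) * Complex.exp ((η : ℂ) * I) := by rw [hmul, hinv]; ring
  -- ρ ≥ 0
  have hρ0 : 0 ≤ ρ := by
    rw [hρ, hre]
    have hd : |φ₀ + η| ≤ Real.pi/3 := by
      rw [abs_le]
      obtain ⟨h1, h2⟩ := hφ₀mem
      rw [ha] at h1; rw [hb] at h2
      constructor <;> linarith
    have hcos : Real.cos (Real.pi/3) ≤ Real.cos (φ₀ + η) := by
      rw [← Real.cos_abs (φ₀ + η)]
      apply Real.cos_le_cos_of_nonneg_of_le_pi (abs_nonneg _)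
      · linarith [Real.pi_pos]
      · exact hd
    rw [Real.cos_pi_div_three] at hcos
    have := Real.neg_one_le_cos (2*φ₀ - η)
    linarith
  have habs : ‖Ncurve φ₀‖ = ρ := by
    rw [hN, norm_mul, Complex.norm_real, Real.norm_of_nonneg hρ0]
    simp [Complex.norm_exp]
  exact ⟨φ₀, ρ, by rw [← habs]; exact abs_Ncurve_ge φ₀, by rw [← habs]; exact abs_Ncurve_le φ₀, hN⟩

lemma unit_conj_eq_inv {z : ℂ} (h : ‖z‖ = 1) : (starRingEnd ℂ) z = z⁻¹ := by
  have h1 : z * (starRingEnd ℂ) z = 1 := by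
    rw [Complex.mul_conj, ← Complex.sq_norm, h]; norm_num
  field_simp [show z ≠ 0 by intro h0; rw [h0] at h; simp at h]
  linear_combination h1

lemma Fdisc_nonpos_of_roots (w z₀ z₁ z₂ : ℂ)
    (h0 : ‖z₀‖ = 1) (h1 : ‖z₁‖ = 1) (h2 : ‖z₂‖ = 1)
    (hprod : z₀ * z₁ * z₂ = 1)
    (hsum : z₀ + z₁ + z₂ = (starRingEnd ℂ) w)
    (hpair : z₀ * z₁ + z₀ * z₂ + z₁ * z₂ = w) :
    Fdisc w ≤ 0 := by
  have hne0 : z₀ ≠ 0 := by intro h; rw [h] at h0; simp at h0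
  have hne1 : z₁ ≠ 0 := by intro h; rw [h] at h1; simp at h1
  have hne2 : z₂ ≠ 0 := by intro h; rw [h] at h2; simp at h2
  have hc0 := unit_conj_eq_inv h0
  have hc1 := unit_conj_eq_inv h1
  have hc2 := unit_conj_eq_inv h2
  have i0 : (starRingEnd ℂ) z₀ = z₁ * z₂ := by
    rw [hc0]; exact inv_eq_of_mul_eq_one_right (by linear_combination hprod)
  have i1 : (starRingEnd ℂ) z₁ = z₀ * z₂ := by
    rw [hc1]; exact inv_eq_of_mul_eq_one_right (by linear_combination hprod)
  have i2 : (starRingEnd ℂ) z₂ = z₀ * z₁ := by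
    rw [hc2]; exact inv_eq_of_mul_eq_one_right (by linear_combination hprod)
  have key : ((Fdisc w : ℝ) : ℂ)
      = -(((normSq (z₀ - z₁) * normSq (z₀ - z₂) * normSq (z₁ - z₂) : ℝ)) : ℂ) := by
    rw [Fdisc_ofReal]
    have e01 : ((normSq (z₀ - z₁) : ℝ) : ℂ) = (z₀ - z₁) * (z₁ * z₂ - z₀ * z₂) := by
      rw [← Complex.mul_conj, map_sub, i0, i1]
    have e02 : ((normSq (z₀ - z₂) : ℝ) : ℂ) = (z₀ - z₂) * (z₁ * z₂ - z₀ * z₁) := by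
      rw [← Complex.mul_conj, map_sub, i0, i2]
    have e12 : ((normSq (z₁ - z₂) : ℝ) : ℂ) = (z₁ - z₂) * (z₀ * z₂ - z₀ * z₁) := by
      rw [← Complex.mul_conj, map_sub, i1, i2]
    push_cast [e01, e02, e12]
    rw [← hsum, ← hpair]
    linear_combination (4*(z₀+z₁+z₂)^3 - 18*(z₀+z₁+z₂)*(z₀*z₁+z₀*z₂+z₁*z₂)
      + 27*(z₀*z₁*z₂+1) - ((z₀-z₁)*(z₀-z₂)*(z₁-z₂))^2) * hprod
  have key2 : Fdisc w = -(normSq (z₀ - z₁) * normSq (z₀ - z₂) * normSq (z₁ - z₂)) := by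
    exact_mod_cast key
  rw [key2]
  have hpos : 0 ≤ normSq (z₀ - z₁) * normSq (z₀ - z₂) * normSq (z₁ - z₂) :=
    mul_nonneg (mul_nonneg (Complex.normSq_nonneg _) (Complex.normSq_nonneg _)) (Complex.normSq_nonneg _)
  linarith

lemma Fdisc_scaled (s φ : ℝ) (hs0 : 0 ≤ s) (hs1 : s ≤ 1) :
    Fdisc ((s : ℂ) * Ncurve φ) ≤ 0 := by
  set a := normSq (Ncurve φ) with hadef
  set b := ((Ncurve φ) ^ 3).re with hbdef
  have ha : a ^ 2 - 8 * b + 18 * a - 27 = 0 := Fdisc_Ncurve φ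
  have ha1 : 1 ≤ a := by
    rw [hadef, ← Complex.sq_norm]
    nlinarith [abs_Ncurve_ge φ, norm_nonneg (Ncurve φ)]
  have ha9 : a ≤ 9 := by
    rw [hadef, ← Complex.sq_norm]
    nlinarith [abs_Ncurve_le φ, norm_nonneg (Ncurve φ)]
  have hns : normSq ((s:ℂ) * Ncurve φ) = s^2 * a := by
    rw [Complex.normSq_mul, Complex.normSq_ofReal]; ring
  have hre : (((s:ℂ) * Ncurve φ) ^ 3).re = s^3 * b := by
    rw [mul_pow, Complex.mul_re,
      show ((s:ℂ)^3).re = s^3 by rw [← Complex.ofReal_pow]; exact Complex.ofReal_re _,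
      show ((s:ℂ)^3).im = 0 by rw [← Complex.ofReal_pow]; exact Complex.ofReal_im _]
    rw [hbdef]; ring
  unfold Fdisc
  rw [hns, hre]
  -- inner positivity
  have hinner : 0 ≤ a^2*s^3 + 27*s^2 - 18*a*s^2 + 27*s + 27 := by
    rcases eq_or_lt_of_le hs0 with h | h
    · rw [← h]; norm_num
    · by_contra hneg
      push_neg at hneg
      have hkey : s^3 * (a^2*s^3 + 27*s^2 - 18*a*s^2 + 27*s + 27)
          = (s^3*a - 9*s^2)^2 + 27*s^3*(s-1)^2 := by ring
      nlinarith [sq_nonneg (s^3*a - 9*s^2), sq_nonneg (s-1), pow_pos h 3,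
        mul_neg_of_pos_of_neg (pow_pos h 3) hneg, mul_nonneg (le_of_lt (pow_pos h 3)) (sq_nonneg (s-1))]
  have hfact : (s^2*a)^2 - 8*(s^3*b) + 18*(s^2*a) - 27
      = -(1-s)*(a^2*s^3 + 27*s^2 - 18*a*s^2 + 27*s + 27) + s^3*(a^2 - 8*b + 18*a - 27) := by
    ring
  rw [hfact, ha]
  have : 0 ≤ (1-s)*(a^2*s^3 + 27*s^2 - 18*a*s^2 + 27*s + 27) :=
    mul_nonneg (by linarith) hinner
  linarith

lemma factor_of_sym (v w z₀ z₁ z₂ : ℂ) (e1 : z₀ + z₁ + z₂ = v)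
    (e2 : z₀ * z₁ + z₀ * z₂ + z₁ * z₂ = w) (e3 : z₀ * z₁ * z₂ = 1) :
    ∀ ζ : ℂ, ζ ^ 3 - v * ζ ^ 2 + w * ζ - 1 = (ζ - z₀) * (ζ - z₁) * (ζ - z₂) := fun ζ => by
  linear_combination (ζ^2) * e1 - ζ * e2 + e3

lemma alg_disc (z c v w : ℂ) (h1 : z * c = 1) (h2 : w = v*z - z^2 + c) :
    (w * v)^2 - 4*(w^3 + v^3) + 18*(w*v) - 27
      = ((v - z)*(w - c) - 4) * ((z^2 - (v - z)*z + c) * (c^2 - (w - c)*c + z)) := by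
  have hz : z ≠ 0 := by
    intro h; rw [h] at h1; simp at h1
  have hc : c = z⁻¹ := eq_inv_of_mul_eq_one_left (by linear_combination h1)
  subst h2 hc
  field_simp
  ring

lemma roots_on_circle_of_Fdisc (w : ℂ) (hF : Fdisc w ≤ 0) :
    ∃ z₀ z₁ z₂ : ℂ, ‖z₀‖ = 1 ∧ ‖z₁‖ = 1 ∧ ‖z₂‖ = 1 ∧
      ∀ ζ : ℂ, ζ ^ 3 - (starRingEnd ℂ) w * ζ ^ 2 + w * ζ - 1 = (ζ - z₀) * (ζ - z₁) * (ζ - z₂) := by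
  obtain ⟨t₀, hroot⟩ := exists_unimodular_root w
  set z₀ : ℂ := Complex.exp (((2*t₀ : ℝ) : ℂ) * I) with hz₀def
  have habs0 : ‖z₀‖ = 1 := Complex.norm_exp_ofReal_mul_I _
  set c : ℂ := (starRingEnd ℂ) z₀ with hcdef
  have habsc : ‖c‖ = 1 := by rw [hcdef, Complex.norm_conj, habs0]
  have hz0c : z₀ * c = 1 := by
    rw [hcdef, Complex.mul_conj, ← Complex.sq_norm, habs0]; norm_num
  set v : ℂ := (starRingEnd ℂ) w with hvdef
  have hconjv : (starRingEnd ℂ) v = w := by rw [hvdef, Complex.conj_conj]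
  have hσc : (starRingEnd ℂ) (v - z₀) = w - c := by
    rw [map_sub, hconjv, hcdef]
  -- relation σ = c * conj σ
  have hrel : v - z₀ = c * (w - c) := by
    linear_combination (-(c^2)) * hroot + (z₀*(c*z₀+1) + c*w - v*(1+c*z₀)) * hz0c
  -- w in terms of v, z₀, c
  have hw : w = v * z₀ - z₀^2 + c := by
    linear_combination c * hroot + (-(w - v*z₀ + z₀^2)) * hz0c
  have hKc : (starRingEnd ℂ) (z₀^2 - (v - z₀)*z₀ + c) = c^2 - (w - c)*c + z₀ := by
    rw [map_add, map_sub, map_pow, map_mul, ← hcdef, hσc, hcdef, Complex.conj_conj]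
  have hreal : Fdisc w = (normSq (v - z₀) - 4) * normSq (z₀^2 - (v - z₀)*z₀ + c) := by
    apply Complex.ofReal_injective
    rw [Complex.ofReal_mul, Complex.ofReal_sub, ← Complex.mul_conj, ← Complex.mul_conj]
    rw [hσc, hKc, Fdisc_ofReal, ← hvdef]
    push_cast
    linear_combination alg_disc z₀ c v w hz0c hw
  rcases eq_or_ne (normSq (z₀^2 - (v - z₀)*z₀ + c)) 0 with hK0 | hKne
  · -- K = 0 : double root case
    have hKzero : z₀^2 - (v - z₀)*z₀ + c = 0 := by
      rwa [Complex.normSq_eq_zero] at hK0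
    have hv2 : v = 2*z₀ + c^2 := by
      linear_combination (-c) * hKzero + (2*z₀ - v) * hz0c
    refine ⟨z₀, z₀, c^2, habs0, habs0, by rw [norm_pow, habsc]; norm_num, ?_⟩
    apply factor_of_sym
    · linear_combination -hv2
    · linear_combination -hw - z₀*hv2 + c*hz0c
    · linear_combination (z₀*c + 1) * hz0c
  · -- two simple unimodular roots from the quadratic
    have hKpos : 0 < normSq (z₀^2 - (v - z₀)*z₀ + c) :=
      lt_of_le_of_ne (Complex.normSq_nonneg _) (Ne.symm hKne)
    have hσ4 : normSq (v - z₀) ≤ 4 := by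
      by_contra hcon
      push_neg at hcon
      nlinarith
    set m : ℝ := Real.sqrt (4 - normSq (v - z₀)) with hmdef
    have hm2 : m^2 = 4 - normSq (v - z₀) := Real.sq_sqrt (by linarith)
    have hmC : ((m : ℝ) : ℂ)^2 = 4 - (v - z₀)*(w - c) := by
      rw [← Complex.ofReal_pow, hm2]
      push_cast
      rw [← hσc, Complex.mul_conj]
    set q : ℂ := Complex.exp (((-t₀ : ℝ) : ℂ) * I) with hqdef
    have hqconj : (starRingEnd ℂ) q = Complex.exp (((t₀ : ℝ) : ℂ) * I) := by
      rw [hqdef, ← Complex.exp_conj]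
      congr 1
      simp
    have hqu : q * (starRingEnd ℂ) q = 1 := by
      rw [Complex.mul_conj, ← Complex.sq_norm, Complex.norm_exp_ofReal_mul_I]; norm_num
    have hqsq : q^2 = c := by
      rw [hqdef, hcdef, hz₀def, ← Complex.exp_conj, ← Complex.exp_nat_mul]
      congr 1
      simp [map_ofNat]
      ring
    have hrel' : v - z₀ = q^2 * (w - c) := by rw [hqsq]; exact hrel
    have hrealq : q * (w - c) = (starRingEnd ℂ) q * (v - z₀) := by
      linear_combination (-((starRingEnd ℂ) q)) * hrel' + (-(q*(w - c))) * hqu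
    set z₁ : ℂ := ((v - z₀) + I*q*(m:ℂ))/2 with hz₁def
    set z₂ : ℂ := ((v - z₀) - I*q*(m:ℂ))/2 with hz₂def
    have hconj1 : (starRingEnd ℂ) z₁ = ((w - c) - I*((starRingEnd ℂ) q)*(m:ℂ))/2 := by
      rw [hz₁def]
      rw [map_div₀, map_add, hσc, map_mul, map_mul, Complex.conj_I, Complex.conj_ofReal]
      simp [map_ofNat]
      ring
    have hconj2 : (starRingEnd ℂ) z₂ = ((w - c) + I*((starRingEnd ℂ) q)*(m:ℂ))/2 := by
      rw [hz₂def]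
      rw [map_div₀, map_sub, hσc, map_mul, map_mul, Complex.conj_I, Complex.conj_ofReal]
      simp [map_ofNat]
      try ring
    have habs1 : ‖z₁‖ = 1 := by
      have hn : z₁ * (starRingEnd ℂ) z₁ = 1 := by
        rw [hconj1, hz₁def]
        linear_combination (I*(m:ℂ)/4) * hrealq + ((m:ℂ)^2/4) * hqu + (1/4) * hmC
          + ((m:ℂ)^2*(q*(starRingEnd ℂ) q)/4) * Complex.I_sq
          + (-(q*(starRingEnd ℂ) q)*(m:ℂ)^2/2) * Complex.I_sq
      have := Complex.mul_conj z₁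
      rw [hn] at this
      have h1 : normSq z₁ = 1 := by exact_mod_cast this.symm
      rw [← Complex.sq_norm] at h1
      nlinarith [norm_nonneg z₁]
    have habs2 : ‖z₂‖ = 1 := by
      have hn : z₂ * (starRingEnd ℂ) z₂ = 1 := by
        rw [hconj2, hz₂def]
        linear_combination (-(I*(m:ℂ)/4)) * hrealq + ((m:ℂ)^2/4) * hqu + (1/4) * hmC
          + ((m:ℂ)^2*(q*(starRingEnd ℂ) q)/4) * Complex.I_sq
          + (-(q*(starRingEnd ℂ) q)*(m:ℂ)^2/2) * Complex.I_sq
      have := Complex.mul_conj z₂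
      rw [hn] at this
      have h1 : normSq z₂ = 1 := by exact_mod_cast this.symm
      rw [← Complex.sq_norm] at h1
      nlinarith [norm_nonneg z₂]
    have hz12 : z₁ * z₂ = c := by
      rw [hz₁def, hz₂def]
      linear_combination ((v - z₀)/4) * hrel + ((m:ℂ)^2/4) * hqsq + (c/4) * hmC
        + ((m:ℂ)^2*q^2/4) * Complex.I_sq + (-(q^2*(m:ℂ)^2/2)) * Complex.I_sq
    refine ⟨z₀, z₁, z₂, habs0, habs1, habs2, ?_⟩
    apply factor_of_sym
    · rw [hz₁def, hz₂def]; ring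
    · have : z₀*z₁ + z₀*z₂ + z₁*z₂ = z₀*(v - z₀) + c := by
        rw [hz12, hz₁def, hz₂def]; ring
      rw [this]
      linear_combination -hw
    · rw [mul_assoc, hz12]; exact hz0c


lemma key_mono {C t ρ : ℝ} (hC : C ≤ 1) (hρ1 : 1 ≤ ρ) (ht3 : t ≤ 3)
    (h1 : t^4 - 8*C*t^3 + 18*t^2 - 27 ≤ 0) (h2 : ρ^4 - 8*C*ρ^3 + 18*ρ^2 - 27 = 0)
    (h3 : ρ < t) : False := by
  have hρ3 : ρ < 3 := lt_of_lt_of_le h3 ht3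
  have hdiff : (t - ρ) * (t^3 + ρ*t^2 + ρ^2*t + ρ^3 - 8*C*(t^2 + t*ρ + ρ^2) + 18*(t + ρ)) ≤ 0 := by
    nlinarith [h1, h2]
  have hbr : t^3 + ρ*t^2 + ρ^2*t + ρ^3 - 8*C*(t^2 + t*ρ + ρ^2) + 18*(t + ρ) ≤ 0 := by
    by_contra hb
    push_neg at hb
    nlinarith [mul_pos (sub_pos.2 h3) hb]
  have hbr2 : t^3 + ρ*t^2 + ρ^2*t + ρ^3 - 8*C*(t^2 + t*ρ + ρ^2) + 18*(t + ρ)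
      = 4*(3-t)*(3-ρ) + (t+ρ-2)*((3-t)^2+(3-ρ)^2) + 8*(1-C)*(t^2 + t*ρ + ρ^2) := by
    ring
  have t1 : 0 ≤ 4*(3-t)*(3-ρ) := by nlinarith
  have t2 : 0 < (t+ρ-2)*((3-t)^2+(3-ρ)^2) := by
    apply mul_pos
    · linarith
    · nlinarith [sq_nonneg (3-t), sq_nonneg (3-ρ)]
  have t3 : 0 ≤ 8*(1-C)*(t^2 + t*ρ + ρ^2) :=
    mul_nonneg (by linarith) (by nlinarith [sq_nonneg (t+ρ), sq_nonneg t, sq_nonneg ρ])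
  linarith [hbr2 ▸ hbr]


theorem stmt5 (u : ℂ) :
    (∃ z₀ z₁ z₂ : ℂ, ‖z₀‖ = 1 ∧ ‖z₁‖ = 1 ∧ ‖z₂‖ = 1 ∧
        ∀ ζ : ℂ, Rcubic u ζ = (ζ - z₀) * (ζ - z₁) * (ζ - z₂))
      ↔ u ∈ regionU := by
  constructor
  · rintro ⟨z₀, z₁, z₂, h0, h1, h2, H⟩
    have H0 := H 0
    have H1 := H 1
    have Hm1 := H (-1)
    simp only [Rcubic] at H0 H1 Hm1
    have hprod : z₀ * z₁ * z₂ = 1 := by linear_combination H0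
    have hsum : z₀ + z₁ + z₂ = (starRingEnd ℂ) u / 6 := by
      linear_combination (H1 + Hm1)/2 - H0
    have hpair : z₀ * z₁ + z₀ * z₂ + z₁ * z₂ = u / 6 := by
      linear_combination (Hm1 - H1)/2
    have hsum' : z₀ + z₁ + z₂ = (starRingEnd ℂ) (u / 6) := by
      rw [map_div₀, map_ofNat]; exact hsum
    have hFw : Fdisc (u / 6) ≤ 0 :=
      Fdisc_nonpos_of_roots (u/6) z₀ z₁ z₂ h0 h1 h2 hprod hsum' hpair
    rcases eq_or_ne u 0 with hu0 | hune
    · exact ⟨0, ⟨le_refl 0, zero_le_one⟩, 0, by rw [hu0]; push_cast; ring⟩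
    · set w : ℂ := u / 6 with hwdef
      have hwne : w ≠ 0 := by
        rw [hwdef]; intro h
        apply hune
        field_simp at h
        simpa using h
      set η : ℝ := w.arg with hηdef
      set t : ℝ := ‖w‖ with htdef
      have ht0 : 0 < t := by
        rw [htdef]; exact norm_pos_iff.mpr hwne
      have hpolar : w = (t : ℂ) * Complex.exp ((η : ℂ) * I) :=
        (Complex.norm_mul_exp_arg_mul_I w).symm
      have ht3 : t ≤ 3 := by
        have habsconj : ‖(starRingEnd ℂ) w‖ = t := Complex.norm_conj w
        rw [← habsconj, ← hsum']
        calc ‖z₀ + z₁ + z₂‖ ≤ ‖z₀ + z₁‖ + ‖z₂‖ :=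
              norm_add_le _ _
        _ ≤ ‖z₀‖ + ‖z₁‖ + ‖z₂‖ := by
              linarith [norm_add_le z₀ z₁]
        _ = 3 := by rw [h0, h1, h2]; norm_num
      -- translate Fdisc w ≤ 0
      have hw3 : (w^3).re = t^3 * Real.cos (3*η) := by
        rw [hpolar]
        rw [mul_pow, ← Complex.exp_nat_mul, ← Complex.ofReal_pow]
        rw [show ((3:ℕ):ℂ) * ((η:ℂ) * I) = ((3*η : ℝ) : ℂ) * I by push_cast; ring]
        rw [Complex.mul_re, Complex.ofReal_re, Complex.ofReal_im, Complex.exp_ofReal_mul_I_re]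
        ring
      have hnw : normSq w = t^2 := by rw [htdef, ← Complex.sq_norm]
      have hqt : t^4 - 8*(Real.cos (3*η))*t^3 + 18*t^2 - 27 ≤ 0 := by
        have := hFw
        unfold Fdisc at this
        rw [hnw, hw3] at this
        nlinarith [this]
      obtain ⟨φ₀, ρ, hρ1, hρ3, hNφ⟩ := ray_lemma η
      have hqρ : ρ^4 - 8*(Real.cos (3*η))*ρ^3 + 18*ρ^2 - 27 = 0 := by
        have hFN := Fdisc_Ncurve φ₀
        have hnN : normSq (Ncurve φ₀) = ρ^2 := by
          rw [hNφ, Complex.normSq_mul, Complex.normSq_ofReal]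
          have : normSq (Complex.exp ((η:ℂ) * I)) = 1 := by
            rw [← Complex.sq_norm, Complex.norm_exp_ofReal_mul_I]; norm_num
          rw [this]; ring
        have hN3 : ((Ncurve φ₀)^3).re = ρ^3 * Real.cos (3*η) := by
          rw [hNφ]
          rw [mul_pow, ← Complex.exp_nat_mul, ← Complex.ofReal_pow]
          rw [show ((3:ℕ):ℂ) * ((η:ℂ) * I) = ((3*η : ℝ) : ℂ) * I by push_cast; ring]
          rw [Complex.mul_re, Complex.ofReal_re, Complex.ofReal_im, Complex.exp_ofReal_mul_I_re]
          ring
        unfold Fdisc at hFN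
        rw [hnN, hN3] at hFN
        nlinarith [hFN]
      have hC1 : Real.cos (3*η) ≤ 1 := Real.cos_le_one _
      have hCm1 : -1 ≤ Real.cos (3*η) := Real.neg_one_le_cos _
      have hle : t ≤ ρ := by
        by_contra hcon
        push_neg at hcon
        exact key_mono hC1 hρ1 ht3 hqt hqρ hcon
      refine ⟨t/ρ, ⟨div_nonneg ht0.le (by linarith), (div_le_one (by linarith)).2 hle⟩, φ₀, ?_⟩
      have hρne : (ρ:ℂ) ≠ 0 := by
        simp only [ne_eq, Complex.ofReal_eq_zero]
        intro h; rw [h] at hρ1; linarith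
      have hgoal : u = 6 * ((t/ρ : ℝ) : ℂ) * Ncurve φ₀ := by
        rw [hNφ]
        have hu6 : u = 6 * w := by rw [hwdef]; field_simp
        rw [hu6, hpolar]
        push_cast
        field_simp
      rw [hgoal]
      rfl
  · rintro ⟨s, ⟨hs0, hs1⟩, φ, hu⟩
    have hu' : u = 6 * (s:ℂ) * Ncurve φ := hu
    have hF : Fdisc ((s : ℂ) * Ncurve φ) ≤ 0 := Fdisc_scaled s φ hs0 hs1
    obtain ⟨z₀, z₁, z₂, h0, h1, h2, H⟩ := roots_on_circle_of_Fdisc _ hF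
    refine ⟨z₀, z₁, z₂, h0, h1, h2, fun ζ => ?_⟩
    have hu6 : u / 6 = (s:ℂ) * Ncurve φ := by rw [hu']; ring
    have hc6 : (starRingEnd ℂ) u / 6 = (starRingEnd ℂ) ((s:ℂ) * Ncurve φ) := by
      rw [← hu6, map_div₀, map_ofNat]
    rw [Rcubic, hc6, hu6]
    exact H ζ
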